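/- arXiv:2204.02364 — 8 statements merged into one kernel-verified Lean document; each statement's English description precedes it below -/
import Mathlib

section
/- Let G₁ be the weighted graph on the index set I₁ = {i ∈ [n] : uᵢ* ≠ 0} with edges {i,j} whenever C_{ij} > 0. Suppose G₁ is connected and non-bipartite, and every index i with uᵢ* = 0 that is not adjacent to any index in I₁ satisfies C_{ii} > 0. Then any vector u ∈ ℝⁿ satisfying uᵢuⱼ = uᵢ*uⱼ* for all pairs (i,j) with C_{ij} > 0 must satisfy u uᵀ = u* (u*)ᵀ, i.e., u = u* or u = -u*. -/
/-- Theorem 1 (sufficiency): if the subgraph `G₁` induced by `C` on the support of `u*`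
is connected and non-bipartite (contains an odd closed walk), and every zero index not
adjacent to the support has a positive self-weight, then any `u` matching all observed
products equals `u*` up to a global sign. -/
theorem stmt_0 {n : ℕ} (C : Fin n → Fin n → ℝ) (ustar : Fin n → ℝ)
    (hsym : ∀ i j, C i j = C j i) (hnn : ∀ i j, 0 ≤ C i j)
    (G : SimpleGraph (Fin n))
    (hG : ∀ i j, G.Adj i j ↔ i ≠ j ∧ ustar i ≠ 0 ∧ ustar j ≠ 0 ∧ 0 < C i j)
    (hconn : ∀ i j, ustar i ≠ 0 → ustar j ≠ 0 → G.Reachable i j)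
    (hodd : ∃ (v : Fin n) (w : G.Walk v v), Odd w.length ∧ ustar v ≠ 0)
    (hI00 : ∀ i, ustar i = 0 → (∀ j, ustar j ≠ 0 → C i j = 0) → 0 < C i i)
    (u : Fin n → ℝ)
    (hu : ∀ i j, 0 < C i j → u i * u j = ustar i * ustar j) :
    u = ustar ∨ u = fun i => -ustar i := by
  -- key walk lemma
  have key : ∀ (a b : Fin n) (w : G.Walk a b),
      (Odd w.length → u a * u b = ustar a * ustar b) ∧
      (Even w.length → u a * ustar b = ustar a * u b) := by
    intro a b w
    induction w with
    | nil =>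
      constructor
      · intro h; simp at h
      · intro _; ring
    | @cons a c b h w ih =>
      obtain ⟨hne, ha, hc, hC⟩ := (hG a c).mp h
      have e1 : u a * u c = ustar a * ustar c := hu a c hC
      have huc : u c ≠ 0 := by
        intro h0
        apply mul_ne_zero ha hc
        rw [← e1, h0, mul_zero]
      constructor
      · intro hoddlen
        have hev : Even w.length := by
          simp only [SimpleGraph.Walk.length_cons] at hoddlen
          rcases Nat.even_or_odd w.length with h' | h'
          · exact h'
          · exfalso; exact (Nat.odd_add_one.mp hoddlen) h'
        have e2 := ih.2 hev
        apply mul_left_cancel₀ huc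
        linear_combination u b * e1 - ustar a * e2
      · intro hevlen
        have hod : Odd w.length := by
          simp only [SimpleGraph.Walk.length_cons, Nat.even_add_one] at hevlen
          exact Nat.not_even_iff_odd.mp hevlen
        have e2 := ih.1 hod
        apply mul_left_cancel₀ huc
        linear_combination ustar b * e1 - ustar a * e2
  obtain ⟨v, w, hw, hv⟩ := hodd
  have hvv : u v * u v = ustar v * ustar v := (key v v w).1 hw
  have hsign : u v = ustar v ∨ u v = -ustar v := mul_self_eq_mul_self_iff.mp hvv
  have main : ∀ ε : ℝ, ε * ε = 1 → u v = ε * ustar v → u = fun i => ε * ustar i := by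
    intro ε hε hv'
    have hεne : ε ≠ 0 := by
      intro h; rw [h] at hε; simp at hε
    have hsupp : ∀ j, ustar j ≠ 0 → u j = ε * ustar j := by
      intro j hj
      obtain ⟨p⟩ := hconn v j hv hj
      rcases Nat.even_or_odd p.length with hev | hod
      · have e := (key v j p).2 hev
        rw [hv'] at e
        have : ustar v * (ε * ustar j) = ustar v * u j := by linear_combination e
        have := mul_left_cancel₀ hv this
        linarith
      · have e := (key v j p).1 hod
        rw [hv'] at e
        have : ustar v * (ε * u j) = ustar v * (ε * (ε * ustar j)) := by
          linear_combination e - ustar v * ustar j * hε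
        have h2 := mul_left_cancel₀ hv this
        exact mul_left_cancel₀ hεne h2
    funext i
    by_cases hi : ustar i = 0
    · rw [hi, mul_zero]
      by_cases hj : ∃ j, ustar j ≠ 0 ∧ 0 < C i j
      · obtain ⟨j, hj1, hj2⟩ := hj
        have e := hu i j hj2
        rw [hi, zero_mul] at e
        have huj : u j ≠ 0 := by
          rw [hsupp j hj1]; exact mul_ne_zero hεne hj1
        exact (mul_eq_zero.mp e).resolve_right huj
      · push_neg at hj
        have hcz : ∀ j, ustar j ≠ 0 → C i j = 0 := by
          intro j hjne
          exact le_antisymm (hj j hjne) (hnn i j)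
        have hCii := hI00 i hi hcz
        have e := hu i i hCii
        rw [hi, mul_zero] at e
        exact mul_self_eq_zero.mp e
    · exact hsupp i hi
  rcases hsign with h | h
  · left
    have := main 1 (by ring) (by rw [h]; ring)
    rw [this]; funext i; simp
  · right
    have := main (-1) (by ring) (by rw [h]; ring)
    rw [this]; funext i; ring
end

section
/- Suppose the graph G₁ induced by C on the support of u* is bipartite with parts I and J (so C_{ij} = 0 whenever i,j ∈ I or i,j ∈ J, including diagonal entries). Define u by uᵢ = uᵢ*/2 for i ∈ I, uᵢ = 2uᵢ* for i ∈ J, and uᵢ = 0 elsewhere. Then uᵢuⱼ = uᵢ*uⱼ* for all pairs (i,j) with C_{ij} > 0, and if J contains at least one element then u uᵀ ≠ u*(u*)ᵀ. -/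
/-- Case II of the necessity part of Theorem 1: a bipartite support graph yields an
essentially different solution obtained by rescaling the two parts. -/
theorem stmt_2 {n : ℕ} (C : Fin n → Fin n → ℝ) (ustar : Fin n → ℝ)
    (hsym : ∀ i j, C i j = C j i) (hnn : ∀ i j, 0 ≤ C i j)
    (I J : Set (Fin n))
    (hunion : ∀ i, ustar i ≠ 0 ↔ i ∈ I ∪ J)
    (hdisj : Disjoint I J)
    (hbip : ∀ i j, 0 < C i j → ustar i ≠ 0 → ustar j ≠ 0 →
      (i ∈ I ∧ j ∈ J) ∨ (i ∈ J ∧ j ∈ I))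
    (u : Fin n → ℝ)
    (huI : ∀ i ∈ I, u i = ustar i / 2)
    (huJ : ∀ i ∈ J, u i = 2 * ustar i)
    (hu0 : ∀ i, ustar i = 0 → u i = 0) :
    (∀ i j, 0 < C i j → u i * u j = ustar i * ustar j) ∧
      (J.Nonempty → ∃ i j, u i * u j ≠ ustar i * ustar j) := by
  constructor
  · intro i j hC
    by_cases hi : ustar i = 0
    · rw [hu0 i hi, hi]; ring
    by_cases hj : ustar j = 0
    · rw [hu0 j hj, hj]; ring
    rcases hbip i j hC hi hj with ⟨hI, hJ⟩ | ⟨hJ, hI⟩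
    · rw [huI i hI, huJ j hJ]; ring
    · rw [huJ i hJ, huI j hI]; ring
  · rintro ⟨j, hj⟩
    refine ⟨j, j, ?_⟩
    have hne : ustar j ≠ 0 := (hunion j).mpr (Or.inr hj)
    rw [huJ j hj]
    intro h
    have h0 : ustar j * ustar j = 0 := by linarith
    exact mul_ne_zero hne hne h0
end

section
/- Let u, u* ∈ ℝⁿ with uᵢ* ≠ 0 for all i in a set S, and suppose uᵢuⱼ = uᵢ*uⱼ* along all edges of a cycle i₁, i₂, …, i_{2k+1}, i₁ of odd length 2k+1 contained in S. Then u_{i₁}² = (u*_{i₁})². -/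
/-- Along an odd cycle on which all products agree with those of `u*` (whose entries
are nonzero on the cycle), the squared value at the starting vertex is recovered. -/
theorem stmt_3 {ι : Type*} (u ustar : ι → ℝ) (S : Set ι) (k : ℕ)
    (idx : ZMod (2 * k + 1) → ι)
    (hS : ∀ s, idx s ∈ S)
    (hne : ∀ i ∈ S, ustar i ≠ 0)
    (hedge : ∀ s, u (idx s) * u (idx (s + 1)) = ustar (idx s) * ustar (idx (s + 1))) :
    (u (idx 0)) ^ 2 = (ustar (idx 0)) ^ 2 := by
  have hne' : ∀ s, ustar (idx s) ≠ 0 := fun s => hne _ (hS s)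
  set P : ZMod (2 * k + 1) → ℝ := fun s => u (idx s) / ustar (idx s) with hPdef
  have hP : ∀ s, P s * P (s + 1) = 1 := by
    intro s
    have h := hedge s
    have h1 := hne' s
    have h2 := hne' (s + 1)
    simp only [hPdef]
    field_simp [hPdef]
    linarith [h]
  have hPne : ∀ s, P s ≠ 0 := by
    intro s h
    have := hP s
    rw [h, zero_mul] at this
    exact one_ne_zero this.symm
  have hstep : ∀ s, P (s + 1) = (P s)⁻¹ := by
    intro s
    exact eq_inv_of_mul_eq_one_left (by rw [mul_comm]; exact hP s)
  have h2 : ∀ s, P (s + 2) = P s := by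
    intro s
    have : s + 2 = (s + 1) + 1 := by ring
    rw [this, hstep, hstep, inv_inv]
  have heven : ∀ m : ℕ, P ((2 * m : ℕ) : ZMod (2 * k + 1)) = P 0 := by
    intro m
    induction m with
    | zero => simp
    | succ n ih =>
      have : ((2 * (n + 1) : ℕ) : ZMod (2 * k + 1)) = ((2 * n : ℕ) : ZMod (2 * k + 1)) + 2 := by
        push_cast; ring
      rw [this, h2, ih]
  have hm1 : ((2 * k : ℕ) : ZMod (2 * k + 1)) = -1 := by
    have h0 : ((2 * k + 1 : ℕ) : ZMod (2 * k + 1)) = 0 := ZMod.natCast_self _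
    push_cast at h0 ⊢
    linear_combination h0
  have hP0 : P 0 = (P 0)⁻¹ := by
    have := hstep (-1 : ZMod (2 * k + 1))
    rw [neg_add_cancel] at this
    have hPm1 : P (-1 : ZMod (2 * k + 1)) = P 0 := by rw [← hm1]; exact heven k
    rw [hPm1] at this
    exact this
  have hsq : P 0 ^ 2 = 1 := by
    have := hPne 0
    field_simp at hP0
    linarith [hP0]
  have := hne' 0
  have : u (idx 0) = P 0 * ustar (idx 0) := by
    simp only [hPdef]
    field_simp [hPdef]
  rw [this, mul_pow, hsq, one_mul]
end

section
/- Let δ ∈ [0,1) and let C ∈ ℝ^{n×n} have nonnegative entries with ∑_{i,j} C_{ij} = 1 and min_{i,j} C_{ij} / max_{i,j} C_{ij} ≥ (1-δ)/(1+δ) (with all entries positive). Suppose C̃ ∈ ℝ^{n×n} has nonnegative entries summing to 1 and C̃ vanishes on a set N of N entry positions. Then ∑_{(i,j)∈N} C_{ij} ≥ (1-δ)N / ((1+δ)n² - 2δN), and consequently the entrywise ℓ₁ distance satisfies ‖C - C̃‖₁ ≥ 2(1-δ)N / ((1+δ)n² - 2δN). -/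
/-- Lemma: under the RIP-type entry-ratio condition, the mass of `C` on any set of `N`
positions where `C̃` vanishes is at least `(1-δ)N / ((1+δ)n² - 2δN)`, and consequently
the entrywise ℓ₁ distance between `C` and `C̃` is at least twice that. -/
theorem stmt_6 {n : ℕ} (δ : ℝ) (hδ : 0 ≤ δ ∧ δ < 1)
    (C Ctil : Fin n → Fin n → ℝ)
    (hCpos : ∀ i j, 0 < C i j)
    (hCsum : ∑ i, ∑ j, C i j = 1)
    (hratio : ∀ i j k l, (1 - δ) * C k l ≤ (1 + δ) * C i j)
    (hCtnn : ∀ i j, 0 ≤ Ctil i j)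
    (hCtsum : ∑ i, ∑ j, Ctil i j = 1)
    (N : Finset (Fin n × Fin n))
    (hzero : ∀ p ∈ N, Ctil p.1 p.2 = 0) :
    (1 - δ) * N.card / ((1 + δ) * n ^ 2 - 2 * δ * N.card) ≤ ∑ p ∈ N, C p.1 p.2 ∧
      2 * (1 - δ) * N.card / ((1 + δ) * n ^ 2 - 2 * δ * N.card) ≤
        ∑ i, ∑ j, |C i j - Ctil i j| := by
  obtain ⟨hδ0, hδ1⟩ := hδ
  set U : Finset (Fin n × Fin n) := Finset.univ with hU
  have hNsub : N ⊆ U := Finset.subset_univ N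
  have hcardU : (U.card : ℝ) = (n : ℝ) ^ 2 := by
    simp [hU, Finset.card_univ, sq]
  set S : ℝ := ∑ p ∈ N, C p.1 p.2 with hS
  have sumC : ∑ p ∈ U, C p.1 p.2 = 1 := by
    rw [← hCsum]; exact (Fintype.sum_prod_type _)
  have sumCt : ∑ p ∈ U, Ctil p.1 p.2 = 1 := by
    rw [← hCtsum]; exact (Fintype.sum_prod_type _)
  have sumCcomp : ∑ p ∈ U \ N, C p.1 p.2 = 1 - S := by
    rw [Finset.sum_sdiff_eq_sub hNsub, sumC]
  have sumCtN : ∑ p ∈ N, Ctil p.1 p.2 = 0 :=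
    Finset.sum_eq_zero hzero
  have sumCtcomp : ∑ p ∈ U \ N, Ctil p.1 p.2 = 1 := by
    rw [Finset.sum_sdiff_eq_sub hNsub, sumCt, sumCtN, sub_zero]
  have hSpos : 0 ≤ S := Finset.sum_nonneg fun p _ => (hCpos p.1 p.2).le
  have hcardle : (N.card : ℝ) ≤ (n : ℝ) ^ 2 := by
    rw [← hcardU]; exact_mod_cast Finset.card_le_card hNsub
  -- key double-sum inequality
  have key : (1 - δ) * N.card * (1 - S) ≤ (1 + δ) * ((n : ℝ) ^ 2 - N.card) * S := by
    have h1 : ∑ p ∈ N, ∑ q ∈ U \ N, (1 - δ) * C q.1 q.2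
        ≤ ∑ p ∈ N, ∑ q ∈ U \ N, (1 + δ) * C p.1 p.2 := by
      refine Finset.sum_le_sum fun p _ => Finset.sum_le_sum fun q _ => ?_
      exact hratio p.1 p.2 q.1 q.2
    have h2 : ∑ p ∈ N, ∑ q ∈ U \ N, (1 - δ) * C q.1 q.2
        = (N.card : ℝ) * ((1 - δ) * (1 - S)) := by
      rw [Finset.sum_const, nsmul_eq_mul, ← Finset.mul_sum, sumCcomp]
    have h3 : ∑ p ∈ N, ∑ q ∈ U \ N, (1 + δ) * C p.1 p.2
        = ((U \ N).card : ℝ) * ((1 + δ) * S) := by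
      simp_rw [Finset.sum_const, nsmul_eq_mul]
      rw [← Finset.mul_sum, ← Finset.mul_sum, ← hS]
    have hcc : ((U \ N).card : ℝ) = (n : ℝ) ^ 2 - N.card := by
      rw [Finset.card_sdiff_of_subset hNsub]
      push_cast [Nat.cast_sub (Finset.card_le_card hNsub)]
      rw [hcardU]
    rw [h2, h3, hcc] at h1
    nlinarith [h1]
  set D : ℝ := (1 + δ) * (n : ℝ) ^ 2 - 2 * δ * N.card with hD
  have hmain : (1 - δ) * N.card ≤ D * S := by
    rw [hD]; nlinarith [key]
  have first : (1 - δ) * N.card / D ≤ S := by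
    rcases eq_or_lt_of_le (by nlinarith : (0:ℝ) ≤ D) with h | h
    · rw [← h, div_zero]; exact hSpos
    · rw [div_le_iff₀ h]; linarith [hmain]
  refine ⟨first, ?_⟩
  -- ℓ₁ bound
  have habs : ∑ i, ∑ j, |C i j - Ctil i j| = ∑ p ∈ U, |C p.1 p.2 - Ctil p.1 p.2| :=
    (Fintype.sum_prod_type fun p => |C p.1 p.2 - Ctil p.1 p.2|).symm
  have hsplit : ∑ p ∈ U, |C p.1 p.2 - Ctil p.1 p.2|
      = ∑ p ∈ N, |C p.1 p.2 - Ctil p.1 p.2| + ∑ p ∈ U \ N, |C p.1 p.2 - Ctil p.1 p.2| := by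
    rw [Finset.sum_sdiff_eq_sub hNsub]; ring
  have hpartN : ∑ p ∈ N, |C p.1 p.2 - Ctil p.1 p.2| = S := by
    rw [hS]
    refine Finset.sum_congr rfl fun p hp => ?_
    rw [hzero p hp, sub_zero, abs_of_pos (hCpos p.1 p.2)]
  have hpartC : S ≤ ∑ p ∈ U \ N, |C p.1 p.2 - Ctil p.1 p.2| := by
    have : ∑ p ∈ U \ N, (Ctil p.1 p.2 - C p.1 p.2) ≤ ∑ p ∈ U \ N, |C p.1 p.2 - Ctil p.1 p.2| := by
      refine Finset.sum_le_sum fun p _ => ?_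
      rw [abs_sub_comm]; exact le_abs_self _
    rw [Finset.sum_sub_distrib, sumCtcomp, sumCcomp] at this
    linarith
  have h2S : 2 * S ≤ ∑ i, ∑ j, |C i j - Ctil i j| := by
    rw [habs, hsplit, hpartN]; linarith
  calc 2 * (1 - δ) * N.card / D = 2 * ((1 - δ) * N.card / D) := by ring
    _ ≤ 2 * S := by linarith
    _ ≤ _ := h2S
end

section
/- Let ε ∈ (0,1), m ≥ 1, and let f(x) = ∑_{i=1}^m (xᵢ² - 1)² + ε ∑_{i≠j} (xᵢxⱼ - 1)². Suppose x ∈ ℝᵐ is a critical point of f (∇f(x) = 0) and let S₁ = ∑ᵢ xᵢ, S₂ = ∑ᵢ xᵢ². If (ε/(1-ε))·S₂ - 1 > 0, then all components of x are equal, and moreover x ∈ {0, 𝟙, -𝟙} where 𝟙 is the all-ones vector. -/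
/-- If `x` is a critical point of the one-parameter objective and
`(ε/(1-ε))·S₂ - 1 > 0`, then all components of `x` are equal and `x` is one of
`0`, the all-ones vector, or its negative. -/
theorem stmt_9 {m : ℕ} (hm : 1 ≤ m) (ε : ℝ) (hε : 0 < ε ∧ ε < 1)
    (x : EuclideanSpace ℝ (Fin m))
    (hcrit : fderiv ℝ
      (fun y : EuclideanSpace ℝ (Fin m) =>
        ∑ i, ((y i) ^ 2 - 1) ^ 2 +
          ε * ∑ i, ∑ j ∈ Finset.univ.erase i, (y i * y j - 1) ^ 2) x = 0)
    (hS : ε / (1 - ε) * (∑ i, (x i) ^ 2) - 1 > 0) :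
    (∀ i j, x i = x j) ∧
      ((∀ i, x i = 0) ∨ (∀ i, x i = 1) ∨ (∀ i, x i = -1)) := by
  obtain ⟨hε0, hε1⟩ := hε
  have h1ε : (0:ℝ) < 1 - ε := by linarith
  set f : EuclideanSpace ℝ (Fin m) → ℝ := fun y =>
    ∑ i, ((y i) ^ 2 - 1) ^ 2 +
      ε * ∑ i, ∑ j ∈ Finset.univ.erase i, (y i * y j - 1) ^ 2 with hf
  have hp : ∀ i, DifferentiableAt ℝ (fun y : EuclideanSpace ℝ (Fin m) => y i) x :=
    fun i => (EuclideanSpace.proj (𝕜 := ℝ) i).differentiableAt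
  have hdiff : DifferentiableAt ℝ f x := by
    apply DifferentiableAt.add
    · exact DifferentiableAt.fun_sum fun i _ => (((hp i).pow 2).sub_const 1).pow 2
    · exact (DifferentiableAt.fun_sum fun i _ => DifferentiableAt.fun_sum fun j _ =>
        (((hp i).mul (hp j)).sub_const 1).pow 2).const_mul ε
  have h0 : HasFDerivAt f (0 : EuclideanSpace ℝ (Fin m) →L[ℝ] ℝ) x :=
    hcrit ▸ hdiff.hasFDerivAt
  set S1 : ℝ := ∑ i, x i with hS1def
  set S2 : ℝ := ∑ i, (x i)^2 with hS2def
  -- the critical point equations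
  have key : ∀ i, (1 - ε) * (x i)^3 + (ε * S2 - (1 - ε)) * x i = ε * S1 := by
    intro i
    set c : Fin m → ℝ := fun j => if j = i then 1 else 0 with hc
    have hline : ∀ j, HasDerivAt (fun t : ℝ => x j + t * c j) (c j) 0 := by
      intro j
      simpa using ((hasDerivAt_id (0:ℝ)).mul_const (c j)).const_add (x j)
    have hterm1 : ∀ j, HasDerivAt (fun t : ℝ => ((x j + t * c j)^2 - 1)^2)
        (4 * ((x j)^2 - 1) * x j * c j) 0 := by
      intro j
      have h := (((hline j).fun_pow 2).sub_const 1).fun_pow 2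
      refine h.congr_deriv ?_
      norm_num
      ring
    have hterm2 : ∀ j k, HasDerivAt (fun t : ℝ => ((x j + t * c j) * (x k + t * c k) - 1)^2)
        (2 * (x j * x k - 1) * (c j * x k + x j * c k)) 0 := by
      intro j k
      have h := (((hline j).fun_mul (hline k)).sub_const 1).fun_pow 2
      refine h.congr_deriv ?_
      norm_num
    have hg : HasDerivAt
        (fun t : ℝ => ∑ j, ((x j + t * c j)^2 - 1)^2 +
          ε * ∑ j, ∑ k ∈ Finset.univ.erase j, ((x j + t * c j) * (x k + t * c k) - 1)^2)
        ((∑ j, 4 * ((x j)^2 - 1) * x j * c j) +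
          ε * ∑ j, ∑ k ∈ Finset.univ.erase j, 2 * (x j * x k - 1) * (c j * x k + x j * c k)) 0 :=
      (HasDerivAt.fun_sum fun j _ => hterm1 j).fun_add
        ((HasDerivAt.fun_sum fun j _ => HasDerivAt.fun_sum fun k _ => hterm2 j k).const_mul ε)
    -- the same function via composing f with the line
    have hlineF : HasDerivAt
        (fun t : ℝ => x + t • (EuclideanSpace.single i (1:ℝ)))
        (EuclideanSpace.single i (1:ℝ)) 0 := by
      simpa using ((hasDerivAt_id (0:ℝ)).smul_const (EuclideanSpace.single i (1:ℝ))).const_add x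
    have hx0 : x + (0:ℝ) • (EuclideanSpace.single i (1:ℝ)) = x := by simp
    have hcomp : HasDerivAt (fun t : ℝ => f (x + t • (EuclideanSpace.single i (1:ℝ)))) 0 0 := by
      have := (hx0 ▸ h0).comp_hasDerivAt 0 hlineF
      exact this
    have hfeq : (fun t : ℝ => f (x + t • (EuclideanSpace.single i (1:ℝ)))) =
        (fun t : ℝ => ∑ j, ((x j + t * c j)^2 - 1)^2 +
          ε * ∑ j, ∑ k ∈ Finset.univ.erase j, ((x j + t * c j) * (x k + t * c k) - 1)^2) := by
      funext t
      have happ : ∀ j, (x + t • (EuclideanSpace.single i (1:ℝ))) j = x j + t * c j := by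
        intro j
        simp [hc, EuclideanSpace.single_apply]
      simp only [hf, happ]
    rw [hfeq] at hcomp
    have hEq := hg.unique hcomp
    -- simplify the sums
    have hd1 : (∑ j, 4 * ((x j)^2 - 1) * x j * c j) = 4 * ((x i)^2 - 1) * x i := by
      rw [Finset.sum_eq_single i]
      · simp [hc]
      · intro j _ hj; simp [hc, hj]
      · simp
    have hd2 : (∑ j, ∑ k ∈ Finset.univ.erase j, 2 * (x j * x k - 1) * (c j * x k + x j * c k))
        = 4 * ∑ k ∈ Finset.univ.erase i, (x i * x k - 1) * x k := by
      have split : ∀ j, ∑ k ∈ Finset.univ.erase j, 2 * (x j * x k - 1) * (c j * x k + x j * c k)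
          = (∑ k ∈ Finset.univ.erase j, 2 * (x j * x k - 1) * (c j * x k))
            + ∑ k ∈ Finset.univ.erase j, 2 * (x j * x k - 1) * (x j * c k) := by
        intro j; rw [← Finset.sum_add_distrib]; apply Finset.sum_congr rfl; intro k _; ring
      simp only [split, Finset.sum_add_distrib]
      have hA : (∑ j, ∑ k ∈ Finset.univ.erase j, 2 * (x j * x k - 1) * (c j * x k))
          = 2 * ∑ k ∈ Finset.univ.erase i, (x i * x k - 1) * x k := by
        rw [Finset.sum_eq_single i]
        · rw [Finset.mul_sum]; apply Finset.sum_congr rfl; intro k _; simp [hc]; ring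
        · intro j _ hj
          apply Finset.sum_eq_zero; intro k _; simp [hc, hj]
        · simp
      have hB : (∑ j, ∑ k ∈ Finset.univ.erase j, 2 * (x j * x k - 1) * (x j * c k))
          = 2 * ∑ k ∈ Finset.univ.erase i, (x i * x k - 1) * x k := by
        have inner : ∀ j, (∑ k ∈ Finset.univ.erase j, 2 * (x j * x k - 1) * (x j * c k))
            = if i ∈ Finset.univ.erase j then 2 * (x j * x i - 1) * x j else 0 := by
          intro j
          have hterm : ∀ k, 2 * (x j * x k - 1) * (x j * c k)
              = if k = i then 2 * (x j * x i - 1) * x j else 0 := by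
            intro k
            simp only [hc]
            split_ifs with h
            · subst h; ring
            · simp
          rw [Finset.sum_congr rfl fun k _ => hterm k,
            Finset.sum_ite_eq' (Finset.univ.erase j) i]
        rw [Finset.sum_congr rfl fun j _ => inner j]
        have hmem : ∀ j : Fin m, (i ∈ Finset.univ.erase j) ↔ ¬ (j = i) := by
          intro j
          simp [Finset.mem_erase, eq_comm]
        rw [Finset.sum_congr rfl fun j _ => by rw [if_congr (hmem j) rfl rfl]]
        rw [← Finset.sum_filter, Finset.filter_ne' Finset.univ i]
        rw [Finset.mul_sum]
        apply Finset.sum_congr rfl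
        intro k _
        ring
      rw [hA, hB]; ring
    rw [hd1, hd2] at hEq
    -- erase sums in terms of S1 S2
    have herase : (∑ k ∈ Finset.univ.erase i, (x i * x k - 1) * x k)
        = x i * (S2 - (x i)^2) - (S1 - x i) := by
      have h1 : (∑ k ∈ Finset.univ.erase i, (x i * x k - 1) * x k)
          = (∑ k, (x i * x k - 1) * x k) - (x i * x i - 1) * x i :=
        Finset.sum_erase_eq_sub (Finset.mem_univ i)
      have h2 : (∑ k, (x i * x k - 1) * x k) = x i * S2 - S1 := by
        rw [hS1def, hS2def, Finset.mul_sum, ← Finset.sum_sub_distrib]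
        apply Finset.sum_congr rfl; intro k _; ring
      rw [h1, h2]; ring
    rw [herase] at hEq
    linear_combination (1/4 : ℝ) * hEq
  -- all coordinates are equal
  have hA : 0 < ε * S2 - (1 - ε) := by
    rw [gt_iff_lt, sub_pos, div_mul_eq_mul_div, lt_div_iff₀ h1ε] at hS
    linarith
  have hinj : ∀ i j, x i = x j := by
    intro i j
    have hi := key i
    have hj := key j
    have hfac : (x i - x j) * ((1 - ε) * ((x i)^2 + x i * x j + (x j)^2) + (ε * S2 - (1 - ε))) = 0 := by
      linear_combination hi - hj
    have hpos : 0 < (1 - ε) * ((x i)^2 + x i * x j + (x j)^2) + (ε * S2 - (1 - ε)) := by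
      nlinarith [sq_nonneg (x i + x j), sq_nonneg (x i - x j)]
    rcases mul_eq_zero.mp hfac with h | h
    · linarith
    · linarith
  refine ⟨hinj, ?_⟩
  set i0 : Fin m := ⟨0, hm⟩ with hi0
  set c := x i0 with hcval
  have hall : ∀ i, x i = c := fun i => hinj i i0
  have hS1c : S1 = m * c := by
    rw [hS1def]
    rw [Finset.sum_congr rfl fun i _ => hall i]
    simp [mul_comm]
  have hS2c : S2 = m * c^2 := by
    rw [hS2def]
    rw [Finset.sum_congr rfl fun i _ => by rw [hall i]]
    simp [mul_comm]
  have hc := key i0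
  rw [hS1c, hS2c, ← hcval] at hc
  have hfac : c * (c^2 - 1) * ((1 - ε) + ε * m) = 0 := by linear_combination hc
  have hm1 : (1:ℝ) ≤ (m:ℝ) := by exact_mod_cast hm
  have hpos : 0 < (1 - ε) + ε * (m:ℝ) := by nlinarith
  have hcc : c * (c^2 - 1) = 0 := by
    rcases mul_eq_zero.mp hfac with h | h
    · exact h
    · linarith
  rcases mul_eq_zero.mp hcc with h | h
  · exact Or.inl fun i => by rw [hall i, h]
  · have : (c - 1) * (c + 1) = 0 := by linear_combination h
    rcases mul_eq_zero.mp this with h' | h'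
    · exact Or.inr (Or.inl fun i => by rw [hall i]; linarith)
    · exact Or.inr (Or.inr fun i => by rw [hall i]; linarith)
end

section
/- Let m ≥ 2 be an even integer and ε ∈ (0, 1/(m+1)). Let x ∈ ℝᵐ satisfy xᵢ² = (1-ε)/(1+(m-1)ε) for all i and ∑ᵢ xᵢ = 0 (possible since m is even). Then x is a critical point of f(x) = ∑ᵢ (xᵢ² - 1)² + ε ∑_{i≠j} (xᵢxⱼ - 1)², i.e., ∇f(x) = 0. -/
open Finset

/-- For even `m` and small `ε`, any vector with components `±√((1-ε)/(1+(m-1)ε))`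
summing to zero is a critical point of the one-parameter objective. -/
theorem stmt_11 {m : ℕ} (hm : 2 ≤ m) (hmeven : Even m)
    (ε : ℝ) (hε : 0 < ε ∧ ε < 1 / (m + 1))
    (x : EuclideanSpace ℝ (Fin m))
    (hx2 : ∀ i, (x i) ^ 2 = (1 - ε) / (1 + ((m : ℝ) - 1) * ε))
    (hxsum : ∑ i, x i = 0) :
    fderiv ℝ
      (fun y : EuclideanSpace ℝ (Fin m) =>
        ∑ i, ((y i) ^ 2 - 1) ^ 2 +
          ε * ∑ i, ∑ j ∈ Finset.univ.erase i, (y i * y j - 1) ^ 2) x = 0 := by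
  have hproj : ∀ i : Fin m, HasFDerivAt (fun y : EuclideanSpace ℝ (Fin m) => (y i : ℝ))
      (EuclideanSpace.proj i : EuclideanSpace ℝ (Fin m) →L[ℝ] ℝ) x :=
    fun i => by exact (EuclideanSpace.proj i : EuclideanSpace ℝ (Fin m) →L[ℝ] ℝ).hasFDerivAt
  have hsq : ∀ i : Fin m, HasFDerivAt (fun y : EuclideanSpace ℝ (Fin m) => ((y i)^2 - 1)^2)
      (((2:ℕ) * ((x i)^2 - 1) ^ 1) • ((((2:ℕ) * (x i) ^ 1) • (EuclideanSpace.proj i : EuclideanSpace ℝ (Fin m) →L[ℝ] ℝ)))) x := by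
    intro i
    exact (hasDerivAt_pow 2 ((x i)^2 - 1)).comp_hasFDerivAt x
      (((hasDerivAt_pow 2 (x i)).comp_hasFDerivAt x (hproj i)).sub_const 1)
  have hpair : ∀ i j : Fin m, HasFDerivAt (fun y : EuclideanSpace ℝ (Fin m) => (y i * y j - 1)^2)
      (((2:ℕ) * (x i * x j - 1) ^ 1) • (x i • (EuclideanSpace.proj j : EuclideanSpace ℝ (Fin m) →L[ℝ] ℝ)
        + x j • (EuclideanSpace.proj i : EuclideanSpace ℝ (Fin m) →L[ℝ] ℝ))) x := by
    intro i j
    exact (hasDerivAt_pow 2 (x i * x j - 1)).comp_hasFDerivAt x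
      (((hproj i).mul (hproj j)).sub_const 1)
  have hf := HasFDerivAt.fun_add
    (HasFDerivAt.fun_sum (u := Finset.univ) fun i _ => hsq i)
    ((HasFDerivAt.fun_sum (u := Finset.univ) fun i _ =>
        HasFDerivAt.fun_sum (u := Finset.univ.erase i) fun j _ => hpair i j).const_mul ε)
  rw [hf.fderiv]
  ext v
  simp [ContinuousLinearMap.sum_apply, smul_eq_mul, mul_add, Finset.mul_sum]
  set t2 : ℝ := (1 - ε) / (1 + ((m : ℝ) - 1) * ε) with ht2
  have hm' : (2:ℝ) ≤ (m:ℝ) := by exact_mod_cast hm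
  have hden : (1 + ((m:ℝ) - 1) * ε) ≠ 0 := by nlinarith [hε.1]
  have ht : t2 * (1 + ((m:ℝ) - 1) * ε) = 1 - ε := div_mul_cancel₀ _ hden
  have hx2' : ∀ i, (x i)^2 = t2 := fun i => (hx2 i).trans ht2.symm
  have hsumsq : ∑ j, (x j)^2 = (m:ℝ) * t2 := by
    rw [Finset.sum_congr rfl (fun j _ => hx2' j), Finset.sum_const, Finset.card_univ,
      Fintype.card_fin, nsmul_eq_mul]
  have hinner : ∀ i, ∑ j, 2*(x i * x j - 1)*(x j * v i) = 2*((m:ℝ)*t2*x i) * v i := by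
    intro i
    calc ∑ j, 2*(x i * x j - 1)*(x j * v i)
        = (∑ j, (x i * (x j)^2 - x j)) * (2 * v i) := by
          rw [Finset.sum_mul]; exact Finset.sum_congr rfl fun j _ => by ring
      _ = ((m:ℝ)*t2*x i - 0) * (2*v i) := by
          rw [Finset.sum_sub_distrib, ← Finset.mul_sum, hsumsq, hxsum]; ring_nf
      _ = 2*((m:ℝ)*t2*x i) * v i := by ring
  have h1 : ∑ i, ∑ j, 2*(x i * x j - 1)*(x j * v i) = ∑ i, 2*((m:ℝ)*t2*x i) * v i :=
    Finset.sum_congr rfl fun i _ => hinner i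
  have h2 : ∑ i, ∑ j, 2*(x i * x j - 1)*(x i * v j) = ∑ i, 2*((m:ℝ)*t2*x i) * v i := by
    rw [Finset.sum_comm]
    exact Finset.sum_congr rfl fun j _ =>
      (Finset.sum_congr rfl fun i _ => by ring).trans (hinner j)
  have h3 : ∑ i, ∑ j, (2*(x i * x j - 1)*(x i * v j) + 2*(x i * x j - 1)*(x j * v i))
      = (∑ i, ∑ j, 2*(x i * x j - 1)*(x i * v j)) + ∑ i, ∑ j, 2*(x i * x j - 1)*(x j * v i) := by
    rw [← Finset.sum_add_distrib]
    exact Finset.sum_congr rfl fun i _ => Finset.sum_add_distrib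
  rw [h3, h1, h2, ← Finset.sum_add_distrib, ← Finset.sum_sub_distrib, Finset.mul_sum,
    ← Finset.sum_add_distrib]
  exact Finset.sum_eq_zero fun i _ => by
    linear_combination (4 * x i * v i * (1 - ε)) * hx2' i + (4 * x i * v i) * ht
end

section
/- Let m ≥ 2 be even and 0 < ε < 1/(m+1). Let x ∈ ℝᵐ with xᵢ² = t := (1-ε)/(1+(m-1)ε) for all i and ∑ᵢ xᵢ = 0, and let H be the Hessian of f(x) = ∑ᵢ(xᵢ²-1)² + ε∑_{i≠j}(xᵢxⱼ-1)² at x. Then H is positive definite; equivalently, for every nonzero c ∈ ℝᵐ, [(3+(m-3)ε)t - 1 + ε]·∑ᵢcᵢ² - ε(∑ᵢcᵢ)² + 2εt·(∑ᵢ sign(xᵢ)cᵢ)² > 0. -/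
/-- For even `m` and `0 < ε < 1/(m+1)`, at the spurious point with `xᵢ² = t` and
`∑ xᵢ = 0`, the Hessian of the one-parameter objective is positive definite;
equivalently, the quadratic form `[(3+(m-3)ε)t - 1 + ε]∑cᵢ² - ε(∑cᵢ)² + 2εt(∑sign(xᵢ)cᵢ)²`
is positive for every nonzero `c`. -/
theorem stmt_16 {m : ℕ} (hm : 2 ≤ m) (hmeven : Even m)
    (ε : ℝ) (hε : 0 < ε ∧ ε < 1 / (m + 1))
    (x : Fin m → ℝ)
    (hx2 : ∀ i, (x i) ^ 2 = (1 - ε) / (1 + ((m : ℝ) - 1) * ε))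
    (hxsum : ∑ i, x i = 0)
    (H : Matrix (Fin m) (Fin m) ℝ)
    (hH : ∀ i j, H i j =
      if i = j then 4 * (3 * (x i) ^ 2 - 1 + ε * ∑ l ∈ Finset.univ.erase i, (x l) ^ 2)
      else 4 * ε * (2 * x i * x j - 1)) :
    H.PosDef ∧
      ∀ c : Fin m → ℝ, c ≠ 0 →
        ((3 + ((m : ℝ) - 3) * ε) * ((1 - ε) / (1 + ((m : ℝ) - 1) * ε)) - 1 + ε)
            * (∑ i, (c i) ^ 2)
          - ε * (∑ i, c i) ^ 2
          + 2 * ε * ((1 - ε) / (1 + ((m : ℝ) - 1) * ε))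
            * (∑ i, Real.sign (x i) * c i) ^ 2 > 0 := by
  obtain ⟨hε0, hε1⟩ := hε
  have hm2 : (2:ℝ) ≤ (m:ℝ) := by exact_mod_cast hm
  have hD : (0:ℝ) < 1 + ((m : ℝ) - 1) * ε := by nlinarith
  have hεm : ε * ((m:ℝ) + 1) < 1 := by
    have h : (0:ℝ) < (m:ℝ) + 1 := by positivity
    calc ε * ((m:ℝ)+1) < (1 / ((m:ℝ)+1)) * ((m:ℝ)+1) := by
          exact mul_lt_mul_of_pos_right hε1 h
      _ = 1 := by field_simp
  set t : ℝ := (1 - ε) / (1 + ((m : ℝ) - 1) * ε) with ht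
  have ht0 : 0 < t := div_pos (by nlinarith) hD
  set A : ℝ := (3 + ((m : ℝ) - 3) * ε) * t - 1 + ε with hA
  clear_value t A
  have hkey : (m:ℝ) * ε < A := by
    have h1 : A - (m:ℝ)*ε
        = ((3 + ((m:ℝ)-3)*ε) * (1-ε) - (1 + ((m:ℝ)-1)*ε)^2) / (1 + ((m:ℝ)-1)*ε) := by
      rw [hA, ht]
      have e : (1 - ε) / (1 + ((m:ℝ)-1)*ε) * (1 + ((m:ℝ)-1)*ε) = 1 - ε := div_mul_cancel₀ _ hD.ne'
      rw [eq_div_iff hD.ne']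
      linear_combination (3 + ((m:ℝ)-3)*ε) * e
    have h2 : 0 < (3 + ((m:ℝ)-3)*ε) * (1-ε) - (1 + ((m:ℝ)-1)*ε)^2 := by
      nlinarith [mul_pos (by linarith : (0:ℝ) < 1 - ε * ((m:ℝ)+1))
        (by nlinarith : (0:ℝ) < 2 + ((m:ℝ)-2)*ε)]
    have := div_pos h2 hD
    linarith [h1 ▸ this]
  have hquad : ∀ c : Fin m → ℝ, c ≠ 0 →
      0 < A * (∑ i, (c i)^2) - ε * (∑ i, c i)^2 := by
    intro c hc
    obtain ⟨i, hi⟩ := Function.ne_iff.mp hc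
    have hS2 : 0 < ∑ j, (c j)^2 := by
      have h1 : (c i)^2 ≤ ∑ j, (c j)^2 :=
        Finset.single_le_sum (fun j _ => sq_nonneg (c j)) (Finset.mem_univ i)
      have h2 : 0 < (c i)^2 := lt_of_le_of_ne (sq_nonneg _) (Ne.symm (pow_ne_zero 2 hi))
      linarith
    have hCS : (∑ i, c i)^2 ≤ (m:ℝ) * ∑ i, (c i)^2 := by
      have := sq_sum_le_card_mul_sum_sq (s := (Finset.univ : Finset (Fin m))) (f := c)
      simpa using this
    nlinarith [mul_pos (sub_pos.mpr hkey) hS2,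
      mul_le_mul_of_nonneg_left hCS hε0.le]
  constructor
  · rw [Matrix.posDef_iff_dotProduct_mulVec]; constructor
    · ext i j
      simp only [Matrix.conjTranspose_apply, star_trivial]
      rw [hH i j, hH j i]
      rcases eq_or_ne i j with h | h
      · subst h; simp
      · rw [if_neg h, if_neg (Ne.symm h)]; ring
    · intro c hc
      have herase : ∀ i : Fin m, ∑ l ∈ Finset.univ.erase i, (x l)^2 = ((m:ℝ)-1)*t := by
        intro i
        rw [Finset.sum_congr rfl (fun l _ => hx2 l)]
        rw [Finset.sum_const, Finset.card_erase_of_mem (Finset.mem_univ i), Finset.card_univ,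
          Fintype.card_fin, nsmul_eq_mul]
        have : ((m - 1 : ℕ) : ℝ) = (m:ℝ) - 1 := by
          have : 1 ≤ m := by omega
          push_cast [this]; ring
        rw [this]
      have hrow : ∀ i, ∑ j, H i j * c j
          = (∑ j, 4*ε*(2*x i*x j - 1) * c j) + 4*A*c i := by
        intro i
        have step : ∀ j, H i j * c j
            = 4*ε*(2*x i*x j - 1) * c j + (if i = j then 4*A*c i else 0) := by
          intro j
          rw [hH i j]
          rcases eq_or_ne i j with h | h
          · subst h
            have hxx : x i * x i = t := by rw [← pow_two]; exact hx2 i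
            rw [if_pos rfl, if_pos rfl, herase i, hx2 i, hA]
            linear_combination (-8) * ε * c i * hxx
          · rw [if_neg h, if_neg h]; ring
        rw [Finset.sum_congr rfl (fun j _ => step j), Finset.sum_add_distrib,
          Finset.sum_ite_eq (Finset.univ : Finset (Fin m)) i (fun _ => 4*A*c i)]
        simp
      have hinner : ∀ i, ∑ j, 4*ε*(2*x i*x j - 1) * c j
          = 8*ε*(x i)*(∑ j, x j * c j) - 4*ε*(∑ j, c j) := by
        intro i
        rw [Finset.mul_sum, Finset.mul_sum, ← Finset.sum_sub_distrib]
        exact Finset.sum_congr rfl (fun j _ => by ring)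
      have htot : dotProduct (star c) (H.mulVec c)
          = 4*A*(∑ i, (c i)^2) - 4*ε*(∑ i, c i)^2 + 8*ε*(∑ i, x i * c i)^2 := by
        simp only [dotProduct, Matrix.mulVec, star_trivial, Pi.star_apply]
        calc ∑ i, c i * ∑ j, H i j * c j
            = ∑ i, ((8*ε*(∑ j, x j * c j)) * (x i * c i)
                - (4*ε*(∑ j, c j)) * c i + 4*A*(c i)^2) := by
              refine Finset.sum_congr rfl (fun i _ => ?_)
              rw [hrow i, hinner i]; ring
          _ = (8*ε*(∑ j, x j * c j)) * (∑ i, x i * c i)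
                - (4*ε*(∑ j, c j)) * (∑ i, c i) + 4*A*(∑ i, (c i)^2) := by
              rw [Finset.sum_add_distrib, Finset.sum_sub_distrib,
                ← Finset.mul_sum, ← Finset.mul_sum, ← Finset.mul_sum]
          _ = _ := by ring
      rw [htot]
      have h1 := hquad c hc
      have h2 : 0 ≤ 8*ε*(∑ i, x i * c i)^2 := by positivity
      linarith
  · intro c hc
    have h1 := hquad c hc
    have h2 : 0 ≤ 2*ε*t*(∑ i, Real.sign (x i) * c i)^2 :=
      mul_nonneg (mul_nonneg (by positivity) ht0.le) (sq_nonneg _)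
    linarith
end

section
/- Let m ≥ 1 and ε > 18/m with ε ≤ 1. Suppose x ∈ ℝᵐ is a second-order critical point of f(x) = ∑ᵢ(xᵢ²-1)² + ε∑_{i≠j}(xᵢxⱼ-1)² (i.e., ∇f(x)=0 and ∇²f(x) ⪰ 0) with S₂ = ∑ᵢxᵢ² > 0. Then S₂ ≥ m²/(2(m+8)); in particular S₂ ≥ m/18. -/
open Finset Matrix

private lemma dsum19 {m : ℕ} (x y : Fin m → ℝ) :
    ∑ i, ∑ j ∈ Finset.univ.erase i, x i * y j
      = (∑ i, x i) * (∑ i, y i) - ∑ i, x i * y i := by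
  have h : ∀ i : Fin m, ∑ j ∈ Finset.univ.erase i, x i * y j
      = x i * (∑ j, y j) - x i * y i := fun i => by
    rw [Finset.sum_erase_eq_sub (mem_univ i), Finset.mul_sum]
  rw [Finset.sum_congr rfl fun i _ => h i, Finset.sum_sub_distrib, Finset.sum_mul]

private lemma dpow19 {m : ℕ} (x : Fin m → ℝ) (a b : ℕ) :
    ∑ i, (x i)^a * ∑ j ∈ Finset.univ.erase i, (x j)^b
      = (∑ i, (x i)^a) * (∑ i, (x i)^b) - ∑ i, (x i)^(a+b) := by
  have h : ∀ i : Fin m, (x i)^a * ∑ j ∈ Finset.univ.erase i, (x j)^b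
      = (x i)^a * (∑ j, (x j)^b) - (x i)^(a+b) := fun i => by
    rw [Finset.sum_erase_eq_sub (mem_univ i), pow_add]; ring
  rw [Finset.sum_congr rfl fun i _ => h i, Finset.sum_sub_distrib, ← Finset.sum_mul]

/-- first-order condition in direction v -/
private lemma firstOrder19 {m : ℕ} (ε : ℝ) (x v : EuclideanSpace ℝ (Fin m))
    (hcrit : fderiv ℝ
      (fun y : EuclideanSpace ℝ (Fin m) =>
        ∑ i, ((y i) ^ 2 - 1) ^ 2 +
          ε * ∑ i, ∑ j ∈ Finset.univ.erase i, (y i * y j - 1) ^ 2) x = 0) :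
    ∑ i, 4*((x i)^2-1)*(x i)*(v i)
      + ε * ∑ i, ∑ j ∈ Finset.univ.erase i, 2*(x i*x j-1)*(v i*x j + x i*v j) = 0 := by
  set F : EuclideanSpace ℝ (Fin m) → ℝ := fun y =>
    ∑ i, ((y i) ^ 2 - 1) ^ 2 +
      ε * ∑ i, ∑ j ∈ Finset.univ.erase i, (y i * y j - 1) ^ 2 with hF
  have hd : ∀ (i : Fin m) (y : EuclideanSpace ℝ (Fin m)),
      DifferentiableAt ℝ (fun y : EuclideanSpace ℝ (Fin m) => y i) y :=
    fun i y => (EuclideanSpace.proj (𝕜 := ℝ) i).differentiableAt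
  have hdiff : DifferentiableAt ℝ F x := by
    apply DifferentiableAt.add
    · exact DifferentiableAt.fun_sum fun i _ => (((hd i x).pow 2).sub_const 1).pow 2
    · exact (DifferentiableAt.fun_sum fun i _ => DifferentiableAt.fun_sum fun j _ =>
        (((hd i x).mul (hd j x)).sub_const 1).pow 2).const_mul ε
  have hline : HasDerivAt (fun t : ℝ => x + t • v) v 0 := by
    simpa using ((hasDerivAt_id (0 : ℝ)).smul_const v).const_add x
  have hcomp : HasDerivAt (fun t : ℝ => F (x + t • v)) ((fderiv ℝ F x) v) 0 := by
    have h1 := hdiff.hasFDerivAt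
    have h2 : HasFDerivAt F (fderiv ℝ F x) ((fun t : ℝ => x + t • v) 0) := by
      simpa using h1
    exact h2.comp_hasDerivAt 0 hline
  have hb : ∀ i : Fin m, HasDerivAt (fun t : ℝ => x i + t * v i) (v i) 0 := fun i => by
    simpa using ((hasDerivAt_id (0 : ℝ)).mul_const (v i)).const_add (x i)
  have hA : ∀ i : Fin m, HasDerivAt (fun t : ℝ => ((x i + t * v i) ^ 2 - 1) ^ 2)
      (4 * ((x i)^2 - 1) * (x i) * (v i)) 0 := by
    intro i
    have := (((hb i).fun_pow 2).sub_const 1).fun_pow 2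
    refine this.congr_deriv ?_
    push_cast
    ring
  have hB : ∀ i j : Fin m, HasDerivAt
      (fun t : ℝ => ((x i + t * v i) * (x j + t * v j) - 1) ^ 2)
      (2 * (x i * x j - 1) * (v i * x j + x i * v j)) 0 := by
    intro i j
    have := (((hb i).fun_mul (hb j)).sub_const 1).fun_pow 2
    refine this.congr_deriv ?_
    push_cast
    ring
  have hexp : (fun t : ℝ => F (x + t • v)) = fun t : ℝ =>
      ∑ i, ((x i + t * v i) ^ 2 - 1) ^ 2 +
        ε * ∑ i, ∑ j ∈ Finset.univ.erase i, ((x i + t * v i) * (x j + t * v j) - 1) ^ 2 := by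
    funext t
    simp [hF, PiLp.add_apply, PiLp.smul_apply, smul_eq_mul]
  have hco : HasDerivAt (fun t : ℝ => F (x + t • v))
      (∑ i, 4*((x i)^2-1)*(x i)*(v i)
        + ε * ∑ i, ∑ j ∈ Finset.univ.erase i, 2*(x i*x j-1)*(v i*x j + x i*v j)) 0 := by
    rw [hexp]
    exact (HasDerivAt.fun_sum fun i _ => hA i).add
      ((HasDerivAt.fun_sum fun i _ => HasDerivAt.fun_sum fun j _ => hB i j).const_mul ε)
  have := hcomp.unique hco
  rw [hcrit] at this
  simpa using this.symm

/-- quadratic form nonneg -/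
private lemma qform19 {m : ℕ} (ε : ℝ) (x : Fin m → ℝ) (H : Matrix (Fin m) (Fin m) ℝ)
    (hH : ∀ i j, H i j =
      if i = j then 4 * (3 * (x i) ^ 2 - 1 + ε * ∑ l ∈ Finset.univ.erase i, (x l) ^ 2)
      else 4 * ε * (2 * x i * x j - 1))
    (hpsd : H.PosSemidef) (c : Fin m → ℝ) :
    0 ≤ ∑ i, c i * ((4 * (3 * (x i) ^ 2 - 1 + ε * ((∑ l, (x l)^2) - (x i)^2))) * c i)
        + ∑ i, ∑ j ∈ Finset.univ.erase i, c i * ((4 * ε * (2 * x i * x j - 1)) * c j) := by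
  have h0 := hpsd.dotProduct_mulVec_nonneg c
  have hd : star c ⬝ᵥ (H *ᵥ c) = ∑ i, ∑ j, c i * (H i j * c j) := by
    simp [dotProduct, mulVec, Finset.mul_sum]
  rw [hd] at h0
  have hsplit : ∀ i : Fin m, ∑ j, c i * (H i j * c j)
      = c i * (H i i * c i) + ∑ j ∈ Finset.univ.erase i, c i * (H i j * c j) := fun i => by
    rw [Finset.sum_erase_eq_sub (mem_univ i)]; ring
  rw [Finset.sum_congr rfl fun i _ => hsplit i, Finset.sum_add_distrib] at h0
  have h1 : ∀ i : Fin m, c i * (H i i * c i)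
      = c i * ((4 * (3 * (x i) ^ 2 - 1 + ε * ((∑ l, (x l)^2) - (x i)^2))) * c i) := fun i => by
    rw [hH i i, if_pos rfl, Finset.sum_erase_eq_sub (mem_univ i)]
  have h2 : ∀ i : Fin m, ∀ j ∈ Finset.univ.erase i, c i * (H i j * c j)
      = c i * ((4 * ε * (2 * x i * x j - 1)) * c j) := fun i j hj => by
    rw [hH i j, if_neg (by exact fun h => (Finset.ne_of_mem_erase hj) h.symm)]
  rw [Finset.sum_congr rfl fun i _ => h1 i,
    Finset.sum_congr rfl fun i _ => Finset.sum_congr rfl fun j hj => h2 i j hj] at h0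
  exact h0

/-- S-form of the quadratic form along x + σ·𝟙 -/
private lemma qconv19 {m : ℕ} (ε σ : ℝ) (x : Fin m → ℝ) :
    ∑ i, (x i + σ) * ((4 * (3 * (x i) ^ 2 - 1 + ε * ((∑ l, (x l)^2) - (x i)^2))) * (x i + σ))
      + ∑ i, ∑ j ∈ Finset.univ.erase i, (x i + σ) * ((4 * ε * (2 * x i * x j - 1)) * (x j + σ))
    = (12 - 12*ε) * (∑ i, (x i)^4) + (24 - 24*ε)*σ * (∑ i, (x i)^3)
      + 12*ε*(∑ i, (x i)^2)^2 + 24*σ*ε*(∑ i, x i)*(∑ i, (x i)^2)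
      + (8*ε*σ^2 - 4*ε)*(∑ i, x i)^2
      + (-4 + 12*σ^2 - 12*ε*σ^2 + 4*ε + 4*σ^2*(m:ℝ)*ε)*(∑ i, (x i)^2)
      + (-8*σ - 8*ε*σ*((m:ℝ)-1))*(∑ i, x i)
      + (-4*σ^2*(m:ℝ) - 4*ε*σ^2*(m:ℝ)*((m:ℝ)-1)) := by
  have hdiag : ∑ i, (x i + σ) * ((4 * (3 * (x i) ^ 2 - 1 + ε * ((∑ l, (x l)^2) - (x i)^2))) * (x i + σ))
      = (4*(3-ε))*(∑ i, (x i)^4) + (8*σ*(3-ε))*(∑ i, (x i)^3)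
        + (4*(ε*(∑ l, (x l)^2)-1) + 4*σ^2*(3-ε))*(∑ i, (x i)^2)
        + (8*σ*(ε*(∑ l, (x l)^2)-1))*(∑ i, x i)
        + (m:ℝ)*(4*σ^2*(ε*(∑ l, (x l)^2)-1)) := by
    rw [Finset.sum_congr rfl fun i _ =>
      (by ring : (x i + σ) * ((4 * (3 * (x i) ^ 2 - 1 + ε * ((∑ l, (x l)^2) - (x i)^2))) * (x i + σ))
        = (4*(3-ε))*(x i)^4 + (8*σ*(3-ε))*(x i)^3
          + (4*(ε*(∑ l, (x l)^2)-1) + 4*σ^2*(3-ε))*(x i)^2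
          + (8*σ*(ε*(∑ l, (x l)^2)-1))*(x i)^1
          + (4*σ^2*(ε*(∑ l, (x l)^2)-1)))]
    simp only [Finset.sum_add_distrib, ← Finset.mul_sum, Finset.sum_const, card_univ,
      Fintype.card_fin, nsmul_eq_mul, pow_one]
    ring
  have hoff : ∑ i, ∑ j ∈ Finset.univ.erase i, (x i + σ) * ((4 * ε * (2 * x i * x j - 1)) * (x j + σ))
      = (8*ε)*((∑ i, (x i)^2)*(∑ i, (x i)^2) - ∑ i, (x i)^4)
        + (8*ε*σ)*((∑ i, (x i)^2)*(∑ i, x i) - ∑ i, (x i)^3)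
        + (8*ε*σ)*((∑ i, x i)*(∑ i, (x i)^2) - ∑ i, (x i)^3)
        + (8*ε*σ^2 - 4*ε)*((∑ i, x i)*(∑ i, x i) - ∑ i, (x i)^2)
        - (4*ε*σ)*((∑ i, x i)*(m:ℝ) - ∑ i, x i)
        - (4*ε*σ)*((m:ℝ)*(∑ i, x i) - ∑ i, x i)
        - (4*ε*σ^2)*((m:ℝ)*(m:ℝ) - (m:ℝ)) := by
    rw [Finset.sum_congr rfl fun i _ => Finset.sum_congr rfl fun j _ =>
      (by ring : (x i + σ) * ((4 * ε * (2 * x i * x j - 1)) * (x j + σ))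
        = (8*ε)*((x i)^2*(x j)^2) + (8*ε*σ)*((x i)^2*(x j)^1)
          + (8*ε*σ)*((x i)^1*(x j)^2) + (8*ε*σ^2 - 4*ε)*((x i)^1*(x j)^1)
          - (4*ε*σ)*((x i)^1*(x j)^0) - (4*ε*σ)*((x i)^0*(x j)^1)
          - (4*ε*σ^2)*((x i)^0*(x j)^0))]
    simp only [Finset.sum_add_distrib, Finset.sum_sub_distrib, ← Finset.mul_sum]
    rw [dpow19 x 2 2, dpow19 x 2 1, dpow19 x 1 2, dpow19 x 1 1, dpow19 x 1 0,
      dpow19 x 0 1, dpow19 x 0 0]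
    simp only [pow_zero, pow_one, one_mul, mul_one, Finset.sum_const, card_univ,
      Fintype.card_fin, nsmul_eq_mul]
    norm_num
  rw [hdiag, hoff]
  ring
set_option maxHeartbeats 1000000 in
/-- At a second-order critical point of the one-parameter objective with `ε > 18/m`,
the second moment `S₂ = ∑ xᵢ²` (if positive) satisfies `S₂ ≥ m²/(2(m+8)) ≥ m/18`. -/
theorem stmt_19 {m : ℕ} (hm : 1 ≤ m) (ε : ℝ)
    (hε : 18 / (m : ℝ) < ε ∧ ε ≤ 1)
    (x : EuclideanSpace ℝ (Fin m))
    (hcrit : fderiv ℝ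
      (fun y : EuclideanSpace ℝ (Fin m) =>
        ∑ i, ((y i) ^ 2 - 1) ^ 2 +
          ε * ∑ i, ∑ j ∈ Finset.univ.erase i, (y i * y j - 1) ^ 2) x = 0)
    (H : Matrix (Fin m) (Fin m) ℝ)
    (hH : ∀ i j, H i j =
      if i = j then 4 * (3 * (x i) ^ 2 - 1 + ε * ∑ l ∈ Finset.univ.erase i, (x l) ^ 2)
      else 4 * ε * (2 * x i * x j - 1))
    (hpsd : H.PosSemidef)
    (hS2 : 0 < ∑ i, (x i) ^ 2) :
    (m : ℝ) ^ 2 / (2 * ((m : ℝ) + 8)) ≤ ∑ i, (x i) ^ 2 ∧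
      (m : ℝ) / 18 ≤ ∑ i, (x i) ^ 2 := by
  obtain ⟨hε1, hε2⟩ := hε
  have hm1 : (1:ℝ) ≤ m := by exact_mod_cast hm
  have hm0 : (0:ℝ) < m := by linarith
  have hε0 : (0:ℝ) < ε := lt_trans (by positivity) hε1
  have hme : 18 < (m:ℝ) * ε := by
    rw [div_lt_iff₀ hm0] at hε1; linarith
  have hm18 : (18:ℝ) < m := by
    have := (div_lt_one hm0).mp (lt_of_lt_of_le hε1 hε2); linarith
  have hm19 : (19:ℝ) ≤ m := by
    have h1 : (18:ℕ) < m := by exact_mod_cast hm18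
    have h2 : (19:ℕ) ≤ m := h1
    exact_mod_cast h2
  -- Cauchy–Schwarz
  have hCS : (∑ i, x i)^2 ≤ (m:ℝ) * ∑ i, (x i)^2 := by
    have := sq_sum_le_card_mul_sum_sq (s := (Finset.univ : Finset (Fin m))) (f := fun i => x i)
    simpa using this
  -- first-order conditions
  have e4raw : ∑ i, 4*((x i)^2-1)*(x i)*(x i)
      + ε * ∑ i, ∑ j ∈ Finset.univ.erase i, 2*(x i*x j-1)*(x i*x j + x i*x j) = 0 :=
    firstOrder19 ε x x hcrit
  have e3raw : ∑ i, 4*((x i)^2-1)*(x i)*1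
      + ε * ∑ i, ∑ j ∈ Finset.univ.erase i, 2*(x i*x j-1)*(1*x j + x i*1) = 0 :=
    firstOrder19 ε x (WithLp.toLp 2 (fun _ => (1:ℝ)) : EuclideanSpace ℝ (Fin m)) hcrit
  -- conversions of first-order sums
  have cdiag4 : ∑ i, 4*((x i)^2-1)*(x i)*(x i) = 4*(∑ i, (x i)^4) - 4*(∑ i, (x i)^2) := by
    rw [Finset.sum_congr rfl fun i _ =>
      (by ring : 4*((x i)^2-1)*(x i)*(x i) = 4*(x i)^4 - 4*(x i)^2)]
    simp only [Finset.sum_sub_distrib, ← Finset.mul_sum]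
  have coff4 : ∑ i, ∑ j ∈ Finset.univ.erase i, 2*(x i*x j-1)*(x i*x j + x i*x j)
      = 4*((∑ i, (x i)^2)*(∑ i, (x i)^2) - ∑ i, (x i)^4)
        - 4*((∑ i, x i)*(∑ i, x i) - ∑ i, (x i)^2) := by
    rw [Finset.sum_congr rfl fun i _ => Finset.sum_congr rfl fun j _ =>
      (by ring : 2*(x i*x j-1)*(x i*x j + x i*x j)
         = 4*((x i)^2*(x j)^2) - 4*((x i)^1*(x j)^1))]
    simp only [Finset.sum_sub_distrib, ← Finset.mul_sum]
    rw [dpow19 x 2 2, dpow19 x 1 1]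
    norm_num
  have cdiag3 : ∑ i, 4*((x i)^2-1)*(x i)*1 = 4*(∑ i, (x i)^3) - 4*(∑ i, x i) := by
    rw [Finset.sum_congr rfl fun i _ =>
      (by ring : 4*((x i)^2-1)*(x i)*1 = 4*(x i)^3 - 4*(x i)^1)]
    simp only [Finset.sum_sub_distrib, ← Finset.mul_sum, pow_one]
  have coff3 : ∑ i, ∑ j ∈ Finset.univ.erase i, 2*(x i*x j-1)*(1*x j + x i*1)
      = 2*((∑ i, x i)*(∑ i, (x i)^2) - ∑ i, (x i)^3)
        + 2*((∑ i, (x i)^2)*(∑ i, x i) - ∑ i, (x i)^3)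
        - 2*((m:ℝ)*(∑ i, x i) - ∑ i, x i)
        - 2*((∑ i, x i)*(m:ℝ) - ∑ i, x i) := by
    rw [Finset.sum_congr rfl fun i _ => Finset.sum_congr rfl fun j _ =>
      (by ring : 2*(x i*x j-1)*(1*x j + x i*1)
         = 2*((x i)^1*(x j)^2) + 2*((x i)^2*(x j)^1)
            - 2*((x i)^0*(x j)^1) - 2*((x i)^1*(x j)^0))]
    simp only [Finset.sum_sub_distrib, Finset.sum_add_distrib, ← Finset.mul_sum]
    rw [dpow19 x 1 2, dpow19 x 2 1, dpow19 x 0 1, dpow19 x 1 0]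
    simp
  rw [cdiag4, coff4] at e4raw
  rw [cdiag3, coff3] at e3raw
  -- second-order conditions
  have q1 : 0 ≤ ∑ i, (x i + (1:ℝ)) * ((4 * (3 * (x i) ^ 2 - 1 + ε * ((∑ l, (x l)^2) - (x i)^2))) * (x i + 1))
      + ∑ i, ∑ j ∈ Finset.univ.erase i, (x i + 1) * ((4 * ε * (2 * x i * x j - 1)) * (x j + 1)) :=
    qform19 ε x H hH hpsd (fun i => x i + 1)
  have qm : 0 ≤ ∑ i, (x i + (-1:ℝ)) * ((4 * (3 * (x i) ^ 2 - 1 + ε * ((∑ l, (x l)^2) - (x i)^2))) * (x i + (-1)))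
      + ∑ i, ∑ j ∈ Finset.univ.erase i, (x i + (-1)) * ((4 * ε * (2 * x i * x j - 1)) * (x j + (-1))) :=
    qform19 ε x H hH hpsd (fun i => x i + (-1))
  rw [qconv19 ε 1 x] at q1
  rw [qconv19 ε (-1) x] at qm
  -- abbreviations
  set s1 := ∑ i, x i with hs1
  set s2 := ∑ i, (x i)^2 with hs2
  set s3 := ∑ i, (x i)^3 with hs3
  set s4 := ∑ i, (x i)^4 with hs4
  clear_value s1 s2 s3 s4
  clear hcrit hH hpsd cdiag4 coff4 cdiag3 coff3 hs1 hs2 hs3 hs4 H x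
  -- key inequality with t = (|s1|)
  have key : 0 ≤ ((m:ℝ)*ε+5-5*ε)*s2 + 4*ε*(|s1|)^2 - 4*((m:ℝ)*ε+1-ε)*(|s1|) - (m:ℝ)*((m:ℝ)*ε+1-ε) := by
    rcases abs_cases s1 with ⟨h1, _⟩ | ⟨h1, _⟩ <;> rw [h1]
    · linarith [e4raw, e3raw, qm]
    · linarith [e4raw, e3raw, q1]
  have hB0 : (0:ℝ) < (m:ℝ)*ε+1-ε := by linarith
  have hA0 : (0:ℝ) < (m:ℝ)*ε+5-5*ε := by linarith
  -- main bound
  have main : (m : ℝ) ^ 2 / (2 * ((m : ℝ) + 8)) ≤ s2 := by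
    by_contra hc
    push_neg at hc
    have hS2m : s2 * (2*((m:ℝ)+8)) < (m:ℝ)^2 := by
      rw [lt_div_iff₀ (by positivity)] at hc; exact hc
    have hs2ltm : s2 < (m:ℝ) := by nlinarith [hS2m, hm19, hS2]
    have hG0 : ((m:ℝ)*ε+5-5*ε)*s2 - (m:ℝ)*((m:ℝ)*ε+1-ε) < 0 := by
      nlinarith [mul_pos hA0 (show (0:ℝ) < (m:ℝ)^2 - s2*(2*((m:ℝ)+8)) by linarith),
        mul_nonneg hm0.le (mul_nonneg hm0.le (show (0:ℝ) ≤ (m:ℝ)*ε - 18 by linarith)),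
        mul_nonneg hε0.le (show (0:ℝ) ≤ 19*(m:ℝ) - 16 by linarith),
        mul_nonneg hm0.le (mul_nonneg hε0.le (show (0:ℝ) ≤ 19*(m:ℝ) - 16 by linarith)),
        sq_nonneg ((m:ℝ)), hm0, hm19]
    have hms2 : (0:ℝ) < (m:ℝ)*s2 := mul_pos hm0 hS2
    obtain ⟨sm, hsm0, hsm2, htsm⟩ : ∃ sm : ℝ, 0 ≤ sm ∧ sm^2 = (m:ℝ)*s2 ∧ (|s1|) ≤ sm := by
      refine ⟨Real.sqrt ((m:ℝ)*s2), Real.sqrt_nonneg _, Real.sq_sqrt hms2.le, ?_⟩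
      have h := Real.sqrt_le_sqrt hCS
      rwa [Real.sqrt_sq_eq_abs] at h
    have hsmpos : 0 < sm := by nlinarith [hms2, hsm0, hsm2]
    have hsmm : sm < (m:ℝ) := by nlinarith [hsm2, hs2ltm, hsm0, hm0]
    have h5 : 5*s2 - 4*sm - (m:ℝ) < 0 := by
      nlinarith [mul_pos (show (0:ℝ) < 5*sm+(m:ℝ) by linarith) (show (0:ℝ) < (m:ℝ) - sm by linarith),
        hsm2, hm0]
    have hGsm : 5*((m:ℝ)*ε+1-ε)*s2 - 4*((m:ℝ)*ε+1-ε)*sm - (m:ℝ)*((m:ℝ)*ε+1-ε) < 0 := by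
      nlinarith [mul_pos hB0 (show (0:ℝ) < -(5*s2-4*sm-(m:ℝ)) by linarith)]
    have hid : (sm - (|s1|))*(((m:ℝ)*ε+5-5*ε)*s2 - (m:ℝ)*((m:ℝ)*ε+1-ε))
        + (|s1|)*(5*((m:ℝ)*ε+1-ε)*s2 - 4*((m:ℝ)*ε+1-ε)*sm - (m:ℝ)*((m:ℝ)*ε+1-ε))
        - sm*(((m:ℝ)*ε+5-5*ε)*s2 + 4*ε*(|s1|)^2 - 4*((m:ℝ)*ε+1-ε)*(|s1|) - (m:ℝ)*((m:ℝ)*ε+1-ε))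
        = 4*ε*(|s1|)*sm*(sm - (|s1|)) := by
      linear_combination (-4*ε*(|s1|)) * hsm2
    have h1 : 0 ≤ 4*ε*(|s1|)*sm*(sm - (|s1|)) := by
      have := abs_nonneg s1
      have h2 : (0:ℝ) ≤ sm - (|s1|) := by linarith
      positivity
    have hkey0 : 0 ≤ sm*(((m:ℝ)*ε+5-5*ε)*s2 + 4*ε*(|s1|)^2 - 4*((m:ℝ)*ε+1-ε)*(|s1|) - (m:ℝ)*((m:ℝ)*ε+1-ε)) :=
      mul_nonneg hsm0 key
    have hneg : (sm - (|s1|))*(((m:ℝ)*ε+5-5*ε)*s2 - (m:ℝ)*((m:ℝ)*ε+1-ε))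
        + (|s1|)*(5*((m:ℝ)*ε+1-ε)*s2 - 4*((m:ℝ)*ε+1-ε)*sm - (m:ℝ)*((m:ℝ)*ε+1-ε)) < 0 := by
      rcases eq_or_lt_of_le (abs_nonneg s1) with h0 | h0
      · rw [← h0]
        simp only [sub_zero, zero_mul, add_zero]
        nlinarith [hsmpos, hG0]
      · have ha : (0:ℝ) ≤ sm - (|s1|) := by linarith
        nlinarith [mul_nonpos_of_nonneg_of_nonpos ha hG0.le,
          mul_neg_of_pos_of_neg h0 hGsm]
    linarith
  refine ⟨main, ?_⟩
  have h18 : (m:ℝ)/18 ≤ (m:ℝ)^2/(2*((m:ℝ)+8)) := by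
    rw [div_le_div_iff₀ (by norm_num) (by positivity)]
    nlinarith [hm1, hm0]
  linarith
end
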